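/- Let G be a graph and let u and v be two adjacent vertices of G such that N_G(u) \ {v} ⊆ N_G(v) \ {u}. Let F be a treedepth decomposition of G in which u is an ancestor of v, and let F' be the rooted forest obtained from F by exchanging the positions of u and v (i.e., swapping the two vertices u and v in F). Then F' is a treedepth decomposition of G of the same depth as F. -/

import Mathlib

/-- `a` is the parent of `b` in the rooted forest given by `par`. -/
def ParentRel {V : Type} (par : V → Option V) (a b : V) : Prop := par b = some a

/-- `a` is a strict ancestor of `b`. -/
def Anc {V : Type} (par : V → Option V) : V → V → Prop :=
  Relation.TransGen (ParentRel par)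

/-- `par` describes a rooted forest (no cycles). -/
def IsForest {V : Type} (par : V → Option V) : Prop := ∀ v, ¬ Anc par v v

/-- `par` is a treedepth decomposition of `G`: a rooted forest on the vertex set of `G`
such that for every edge one endpoint is an ancestor of the other. -/
def IsTDDecomp {V : Type} (G : SimpleGraph V) (par : V → Option V) : Prop :=
  IsForest par ∧ ∀ u v, G.Adj u v → Anc par u v ∨ Anc par v u

/-- The depth of vertex `v` in the forest: the number of vertices on the path
from its root to `v`, i.e. one plus the number of strict ancestors of `v`. -/
noncomputable def vdepth {V : Type} (par : V → Option V) (v : V) : ℕ :=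
  Nat.card {a // Anc par a v} + 1

/-- The height (depth) of the forest: the maximal depth of a vertex. -/
noncomputable def fheight {V : Type} (par : V → Option V) : ℕ := ⨆ v, vdepth par v

/-- The treedepth of `G`: the minimum depth of a treedepth decomposition of `G`. -/
noncomputable def treedepth {V : Type} [Finite V] (G : SimpleGraph V) : ℕ :=
  sInf {d | ∃ par : V → Option V, IsTDDecomp G par ∧ fheight par = d}

/-- If `u` and `v` are adjacent, `N(u) \ {v} ⊆ N(v) \ {u}`, and `F` is a treedepth
decomposition of `G` in which `u` is an ancestor of `v`, then the forest obtained from `F`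
by swapping the vertices `u` and `v` is again a treedepth decomposition of `G`,
of the same depth. -/

lemma anc_chain {V : Type} (par : V → Option V) {a w : V} (ha : Anc par a w) :
    ∀ b, Anc par b w → a = b ∨ Anc par a b ∨ Anc par b a := by
  induction ha with
  | single h =>
    intro b hb
    cases hb with
    | single h' =>
      left
      have : some a = some b := h.symm.trans h'
      exact Option.some_injective _ this
    | tail h1 h2 =>
      right; right
      have : _ = a := Option.some_injective _ ((h2 : par _ = _).symm.trans h)
      exact this ▸ h1
  | tail h1 h2 ih =>
    intro b hb
    cases hb with
    | single h' =>
      right; left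
      have : b = _ := Option.some_injective _ ((h' : par _ = _).symm.trans h2)
      exact this ▸ h1
    | tail hb1 hb2 =>
      have : _ = _ := Option.some_injective _ ((hb2 : par _ = _).symm.trans h2)
      exact ih b (this ▸ hb1)

theorem td_swap {V : Type} [Finite V] [DecidableEq V] (G : SimpleGraph V) (u v : V)
    (huv : G.Adj u v) (hN : G.neighborSet u \ {v} ⊆ G.neighborSet v \ {u})
    (par : V → Option V) (hpar : IsTDDecomp G par) (hanc : Anc par u v) :
    IsTDDecomp G (fun x => (par (Equiv.swap u v x)).map (Equiv.swap u v)) ∧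
    fheight (fun x => (par (Equiv.swap u v x)).map (Equiv.swap u v)) = fheight par := by
  set σ := Equiv.swap u v with hσ
  set par' : V → Option V := fun x => (par (σ x)).map σ with hpar'def
  have hσσ : ∀ x, σ (σ x) = x := fun x => Equiv.swap_apply_self u v x
  have key : ∀ a b, Anc par a b → Anc par' (σ a) (σ b) := by
    intro a b h
    refine Relation.TransGen.lift σ ?_ _ _ h
    intro x y hxy
    show (par (σ (σ y))).map σ = some (σ x)
    rw [hσσ, (hxy : par y = some x), Option.map_some]
  have key' : ∀ a b, Anc par' a b → Anc par (σ a) (σ b) := by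
    intro a b h
    refine Relation.TransGen.lift σ ?_ _ _ h
    intro x y hxy
    have hxy' : (par (σ y)).map σ = some x := hxy
    show par (σ y) = some (σ x)
    rcases Option.map_eq_some_iff.mp hxy' with ⟨z, hz, hz2⟩
    rw [hz, ← hz2, hσσ]
  have anc_iff : ∀ a b, Anc par' a b ↔ Anc par (σ a) (σ b) := by
    intro a b
    constructor
    · exact key' a b
    · intro h
      have := key _ _ h
      rwa [hσσ, hσσ] at this
  have hforest : IsForest par' := by
    intro x hx
    exact hpar.1 (σ x) ((anc_iff x x).mp hx)
  have comp : ∀ x y, G.Adj x y → Anc par x y ∨ Anc par y x := hpar.2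
  have main : ∀ a, G.Adj a v → a ≠ u → Anc par (σ a) (σ v) ∨ Anc par (σ v) (σ a) := by
    intro a hab hau
    have hav : a ≠ v := hab.ne
    have hsa : σ a = a := Equiv.swap_apply_of_ne_of_ne hau hav
    have hsv : σ v = u := Equiv.swap_apply_right u v
    rw [hsa, hsv]
    rcases comp a v hab with h | h
    · rcases anc_chain par h u hanc with heq | h2 | h2
      · exact absurd heq hau
      · exact Or.inl h2
      · exact Or.inr h2
    · exact Or.inr (hanc.trans h)
  have hedges : ∀ a b, G.Adj a b → Anc par' a b ∨ Anc par' b a := by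
    intro a b hab
    rw [anc_iff, anc_iff]
    by_cases hau : a = u
    · by_cases hbv : b = v
      · rw [hau, hbv, Equiv.swap_apply_left, Equiv.swap_apply_right]
        exact Or.inr hanc
      · have hb : b ∈ G.neighborSet v \ {u} := by
          refine hN ⟨?_, by simpa using hbv⟩
          exact (SimpleGraph.mem_neighborSet G u b).mpr (hau ▸ hab)
        have hbu : b ≠ u := by simpa using hb.2
        have hsa : σ a = v := hau ▸ Equiv.swap_apply_left u v
        have hsb : σ b = b := Equiv.swap_apply_of_ne_of_ne hbu hbv
        rw [hsa, hsb]
        exact comp v b hb.1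
    · by_cases hav : a = v
      · by_cases hbu : b = u
        · rw [hav, hbu, Equiv.swap_apply_left, Equiv.swap_apply_right]
          exact Or.inl hanc
        · exact (main b (hav ▸ hab.symm) hbu).symm.imp (hav ▸ id) (hav ▸ id)
      · by_cases hbu : b = u
        · have ha : a ∈ G.neighborSet v \ {u} := by
            refine hN ⟨?_, by simpa using hav⟩
            exact (SimpleGraph.mem_neighborSet G u a).mpr (hbu ▸ hab.symm)
          have hsa : σ a = a := Equiv.swap_apply_of_ne_of_ne hau hav
          have hsb : σ b = v := hbu ▸ Equiv.swap_apply_left u v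
          rw [hsa, hsb]
          exact (comp v a ha.1).symm
        · by_cases hbv : b = v
          · exact hbv ▸ main a (hbv ▸ hab) hau
          · rw [Equiv.swap_apply_of_ne_of_ne hau hav,
              Equiv.swap_apply_of_ne_of_ne hbu hbv]
            exact comp a b hab
  refine ⟨⟨hforest, hedges⟩, ?_⟩
  have hvd : ∀ x, vdepth par' x = vdepth par (σ x) := by
    intro x
    unfold vdepth
    congr 1
    exact Nat.card_congr (Equiv.subtypeEquiv σ (fun a => anc_iff a x))
  show (⨆ x, vdepth par' x) = ⨆ x, vdepth par x
  calc (⨆ x, vdepth par' x) = ⨆ x, vdepth par (σ x) := by simp only [hvd]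
    _ = ⨆ x, vdepth par x := σ.surjective.iSup_comp _
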